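/- For every r ≥ 2 and 2 ≤ ℓ₁ ≤ ⋯ ≤ ℓ_r there is a constant C (depending only on r and the ℓᵢ) such that F(n, L^{(r)}_{ℓ₁,…,ℓ_r}) ≤ C · n^{1 − 1/(ℓ₁⋯ℓ_{r−1})} for all n ≥ 1. -/

import Mathlib

open Pointwise

/-- `A ⊆ G` is `L^{(r)}_{ℓ₁,…,ℓ_r}`-free. -/
def LFree {G : Type*} [AddCommGroup G] [DecidableEq G] (r : ℕ) (ℓ : Fin r → ℕ)
    (A : Set G) : Prop :=
  ∀ L : Fin r → Finset G, (∀ i, (L i).card = ℓ i) → ¬ ((↑(∑ i, L i) : Set G) ⊆ A)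

/-- `F(n, L^{(r)}_{ℓ₁,…,ℓ_r})`. -/
noncomputable def Ffin (n r : ℕ) (ℓ : Fin r → ℕ) : ℕ :=
  sSup {k | ∃ A : Finset ℤ, (↑A : Set ℤ) ⊆ Set.Icc (1 : ℤ) n ∧ LFree r ℓ (A : Set ℤ) ∧ A.card = k}

private lemma sumset_lfree_aux {r : ℕ} {ℓ : Fin (r + 2) → ℕ} {A : Finset ℤ}
    (hfree : LFree (r + 2) ℓ (A : Set ℤ)) {S : Finset ℤ} (hS : S.card = ℓ 0) :
    LFree (r + 1) (fun i => ℓ i.succ)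
      ((A.filter fun t => ∀ s ∈ S, t + s ∈ A : Finset ℤ) : Set ℤ) := by
  intro L hL hsub
  refine hfree (Fin.cons S L) ?_ ?_
  · intro i
    induction i using Fin.cases with
    | zero => simpa using hS
    | succ j => simpa using hL j
  · rw [Fin.sum_cons]
    intro x hx
    rw [Finset.mem_coe, Finset.mem_add] at hx
    obtain ⟨s, hs, y, hy, rfl⟩ := hx
    have hy' : y ∈ A.filter fun t => ∀ s ∈ S, t + s ∈ A := by
      exact_mod_cast hsub (Finset.mem_coe.2 hy)
    rw [Finset.mem_filter] at hy'
    have := hy'.2 s hs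
    rw [add_comm] at this
    exact Finset.mem_coe.2 this

private lemma sum_finset_nonempty {k : ℕ} (L : Fin k → Finset ℤ) (h : ∀ i, (L i).Nonempty) :
    (∑ i, L i).Nonempty := by
  induction k with
  | zero => simp only [Finset.univ_eq_empty, Finset.sum_empty]; exact ⟨(0 : ℤ), Finset.zero_mem_zero⟩
  | succ k ih =>
    rw [Fin.sum_univ_succ]
    exact (h 0).add (ih _ fun i => h i.succ)

private lemma key_lemma : ∀ (r : ℕ) (ℓ : Fin (r + 1) → ℕ), (∀ i, 1 ≤ ℓ i) →
    ∃ C : ℝ, 0 < C ∧ ∀ n : ℕ, 1 ≤ n → ∀ A : Finset ℤ,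
      (↑A : Set ℤ) ⊆ Set.Icc (1 : ℤ) n → LFree (r + 1) ℓ (A : Set ℤ) →
      (A.card : ℝ) ≤ C * (n : ℝ) ^ (1 - 1 / (∏ i : Fin r, (ℓ i.castSucc : ℝ))) := by
  intro r
  induction r with
  | zero =>
    intro ℓ hℓ
    refine ⟨(ℓ 0 : ℝ), by exact_mod_cast Nat.lt_of_lt_of_le Nat.zero_lt_one (hℓ 0), ?_⟩
    intro n hn A hA hfree
    simp only [Finset.univ_eq_empty, Finset.prod_empty]
    rw [div_one, sub_self, Real.rpow_zero, mul_one]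
    by_contra hcon
    push_neg at hcon
    have hle : ℓ 0 ≤ A.card := by exact_mod_cast hcon.le
    obtain ⟨T, hTA, hTcard⟩ := Finset.exists_subset_card_eq hle
    refine hfree (fun _ => T) (fun i => by rw [Fin.fin_one_eq_zero i]; exact hTcard) ?_
    rw [Fin.sum_univ_one]
    exact Finset.coe_subset.2 hTA
  | succ r IH =>
    intro ℓ hℓ
    set ℓ' : Fin (r + 1) → ℕ := fun i => ℓ i.succ with hl'def
    obtain ⟨C', hC'pos, hC'⟩ := IH ℓ' (fun i => hℓ i.succ)
    set Q := ℓ 0 with hQdef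
    have hQ1 : 1 ≤ Q := hℓ 0
    have hQR : (1 : ℝ) ≤ (Q : ℝ) := by exact_mod_cast hQ1
    set P' : ℝ := ∏ i : Fin r, (ℓ' i.castSucc : ℝ) with hP'def
    have hP'1 : (1 : ℝ) ≤ P' := by
      rw [hP'def, ← Nat.cast_prod]
      have h1 : 1 ≤ ∏ i : Fin r, ℓ' i.castSucc :=
        Finset.one_le_prod' (fun i _ => hℓ (i.castSucc).succ)
      exact_mod_cast h1
    set P : ℝ := ∏ i : Fin (r + 1), (ℓ i.castSucc : ℝ) with hPdef
    have hPQ : P = (Q : ℝ) * P' := by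
      simp only [hPdef, hP'def, hQdef, hl'def, Fin.prod_univ_succ, Fin.succ_castSucc,
        Fin.castSucc_zero]
    set D : ℝ := (Nat.factorial Q : ℝ) * C' with hDdef
    have hDpos : 0 < D := mul_pos (by exact_mod_cast Q.factorial_pos) hC'pos
    set e : ℝ := 1 / (Q : ℝ) with hedef
    have hP1 : (1 : ℝ) ≤ P := by rw [hPQ]; nlinarith
    have hexp : (0 : ℝ) ≤ 1 - 1 / P := by
      rw [sub_nonneg]
      exact div_le_one_of_le₀ hP1 (by linarith)
    refine ⟨max (2 * D ^ e) (2 * (Q : ℝ) + 1), lt_max_of_lt_right (by positivity), ?_⟩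
    intro n hn A hA hfree
    have hnR : (1 : ℝ) ≤ (n : ℝ) := by exact_mod_cast hn
    have hnpos : (0 : ℝ) < (n : ℝ) := lt_of_lt_of_le one_pos hnR
    have hnpow : (1 : ℝ) ≤ (n : ℝ) ^ (1 - 1 / P) := Real.one_le_rpow hnR hexp
    rcases le_or_gt A.card (2 * Q) with hsmall | hbig
    · calc (A.card : ℝ) ≤ 2 * (Q : ℝ) + 1 := by
            have : (A.card : ℝ) ≤ 2 * (Q : ℝ) := by exact_mod_cast hsmall
            linarith
        _ ≤ max (2 * D ^ e) (2 * (Q : ℝ) + 1) := le_max_right _ _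
        _ ≤ _ := le_mul_of_one_le_right
            (le_trans (by positivity : (0:ℝ) ≤ 2 * (Q:ℝ) + 1) (le_max_right _ _)) hnpow
    · classical
      set a := A.card with hadef
      set 𝒯 := A.powersetCard Q with hTdef
      have h𝒯card : 𝒯.card = a.choose Q := Finset.card_powersetCard _ _
      set μ : Finset ℤ → ℤ := fun T => WithTop.untopD 0 T.min with hμdef
      have hμmin : ∀ (T : Finset ℤ) (h : T.Nonempty), μ T = T.min' h := by
        intro T h
        rw [hμdef]
        show WithTop.untopD 0 T.min = T.min' h
        rw [← Finset.coe_min' h]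
        exact WithTop.untopD_coe _ _
      set f : Finset ℤ → Finset ℤ := fun T => T.image (fun x => x - μ T) with hfdef
      set shapes := ((Finset.Icc (1:ℤ) ((n:ℤ) - 1)).powersetCard (Q - 1)).image
        (insert (0:ℤ)) with hshdef
      have hTfacts : ∀ T ∈ 𝒯, T ⊆ A ∧ T.card = Q := fun T hT => Finset.mem_powersetCard.1 hT
      have hfcard : ∀ T : Finset ℤ, (f T).card = T.card := by
        intro T
        rw [hfdef]
        exact Finset.card_image_of_injective _ (fun x y h => by simpa using h)
      have hmaps : ∀ T ∈ 𝒯, f T ∈ shapes := by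
        intro T hT
        obtain ⟨hTA, hTcard⟩ := hTfacts T hT
        have hTne : T.Nonempty := Finset.card_pos.1 (by omega)
        have hμmem : μ T ∈ T := by rw [hμmin T hTne]; exact T.min'_mem hTne
        have hμle : ∀ x ∈ T, μ T ≤ x := by
          intro x hx; rw [hμmin T hTne]; exact T.min'_le x hx
        have hbounds : ∀ x ∈ T, 1 ≤ x ∧ x ≤ (n:ℤ) := by
          intro x hx
          have := hA (Finset.mem_coe.2 (hTA hx))
          simpa using this
        have h0 : (0:ℤ) ∈ f T := Finset.mem_image.2 ⟨μ T, hμmem, sub_self _⟩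
        rw [hshdef]
        refine Finset.mem_image.2 ⟨(f T).erase 0, ?_, Finset.insert_erase h0⟩
        refine Finset.mem_powersetCard.2 ⟨?_, ?_⟩
        · intro y hy
          obtain ⟨hy0, hyf⟩ := Finset.mem_erase.1 hy
          obtain ⟨x, hx, rfl⟩ := Finset.mem_image.1 hyf
          have h1 := hμle x hx
          have h2 := (hbounds x hx).2
          have h3 := (hbounds (μ T) hμmem).1
          rw [Finset.mem_Icc]
          omega
        · rw [Finset.card_erase_of_mem h0, hfcard, hTcard]
      have h𝒯ne : 𝒯.Nonempty := by
        obtain ⟨T, hTA, hTc⟩ := Finset.exists_subset_card_eq (show Q ≤ A.card by omega)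
        exact ⟨T, Finset.mem_powersetCard.2 ⟨hTA, hTc⟩⟩
      have hshne : shapes.Nonempty := ⟨f h𝒯ne.choose, hmaps _ h𝒯ne.choose_spec⟩
      obtain ⟨S, hSsh, hSle⟩ : ∃ S ∈ shapes,
          𝒯.card ≤ shapes.card * (𝒯.filter (fun T => f T = S)).card := by
        have hsum := Finset.card_eq_sum_card_fiberwise hmaps
        refine Finset.exists_le_of_sum_le hshne ?_
        rw [Finset.sum_const, ← Finset.mul_sum, ← hsum, smul_eq_mul, mul_comm]
      set fib := 𝒯.filter (fun T => f T = S) with hfibdef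
      have hfibpos : 0 < fib.card := by
        by_contra h
        push_neg at h
        have h0 : fib.card = 0 := by omega
        rw [h0, mul_zero] at hSle
        have := h𝒯ne.card_pos
        omega
      obtain ⟨T₀, hT₀⟩ := Finset.card_pos.1 hfibpos
      have hT₀f := Finset.mem_filter.1 hT₀
      have hScard : S.card = Q := by
        rw [← hT₀f.2, hfcard]
        exact (hTfacts _ hT₀f.1).2
      set A' := A.filter (fun t => ∀ s ∈ S, t + s ∈ A) with hA'def
      have hrecon : ∀ T ∈ fib, T = S.image (· + μ T) := by
        intro T hT
        obtain ⟨hT𝒯, hfT⟩ := Finset.mem_filter.1 hT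
        rw [← hfT, hfdef]
        rw [Finset.image_image]
        ext x
        simp
      have hfible : fib.card ≤ A'.card := by
        apply Finset.card_le_card_of_injOn μ
        · intro T hT
          obtain ⟨hT𝒯, hfT⟩ := Finset.mem_filter.1 hT
          obtain ⟨hTA, hTcard⟩ := hTfacts T hT𝒯
          have hTne : T.Nonempty := Finset.card_pos.1 (by omega)
          have hμmem : μ T ∈ T := by rw [hμmin T hTne]; exact T.min'_mem hTne
          rw [hA'def, Finset.mem_coe, Finset.mem_filter]
          refine ⟨hTA hμmem, ?_⟩
          intro s hs
          rw [← hfT, hfdef] at hs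
          obtain ⟨x, hx, rfl⟩ := Finset.mem_image.1 hs
          simpa using hTA hx
        · intro T₁ h₁ T₂ h₂ hμeq
          rw [hrecon T₁ (Finset.mem_coe.1 h₁), hrecon T₂ (Finset.mem_coe.1 h₂), hμeq]
      have hA'sub : (↑A' : Set ℤ) ⊆ Set.Icc 1 (n:ℤ) := by
        intro x hx
        apply hA
        rw [Finset.mem_coe] at hx ⊢
        exact Finset.filter_subset _ _ hx
      have hA'free : LFree (r + 1) ℓ' (↑A' : Set ℤ) := sumset_lfree_aux hfree hScard
      have hA'le : (A'.card : ℝ) ≤ C' * (n : ℝ) ^ (1 - 1 / P') := hC' n hn A' hA'sub hA'free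
      have hshcard : shapes.card ≤ n ^ (Q - 1) := by
        calc shapes.card ≤ ((Finset.Icc (1:ℤ) ((n:ℤ)-1)).powersetCard (Q-1)).card :=
              Finset.card_image_le
          _ = ((Finset.Icc (1:ℤ) ((n:ℤ)-1)).card).choose (Q-1) :=
              Finset.card_powersetCard _ _
          _ ≤ ((Finset.Icc (1:ℤ) ((n:ℤ)-1)).card) ^ (Q-1) := Nat.choose_le_pow _ _
          _ ≤ n ^ (Q-1) := Nat.pow_le_pow_left (by rw [Int.card_Icc]; omega) _
      have hnat : a.choose Q ≤ n ^ (Q - 1) * A'.card := by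
        calc a.choose Q = 𝒯.card := h𝒯card.symm
          _ ≤ shapes.card * fib.card := hSle
          _ ≤ n ^ (Q-1) * A'.card := Nat.mul_le_mul hshcard hfible
      have hdesc : (a + 1 - Q) ^ Q ≤ Nat.factorial Q * a.choose Q := by
        calc (a + 1 - Q)^Q ≤ a.descFactorial Q := Nat.pow_sub_le_descFactorial a Q
          _ = Q.factorial * a.choose Q := Nat.descFactorial_eq_factorial_mul_choose a Q
      have hhalf : (a:ℝ)/2 ≤ ((a + 1 - Q : ℕ) : ℝ) := by
        have hcast : ((a + 1 - Q : ℕ):ℝ) = (a:ℝ) + 1 - (Q:ℝ) := by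
          have h1 : Q ≤ a + 1 := by omega
          push_cast [h1]
          ring
        rw [hcast]
        have h2 : (Q:ℝ) ≤ (a:ℝ)/2 := by
          rw [le_div_iff₀ (by norm_num : (0:ℝ) < 2)]
          exact_mod_cast (by omega : Q * 2 ≤ a)
        linarith
      have hc2 : ((a:ℝ)/2)^Q ≤ (Q.factorial:ℝ) * ((n:ℝ)^(Q-1) * (A'.card:ℝ)) := by
        calc ((a:ℝ)/2)^Q ≤ (((a+1-Q:ℕ):ℝ))^Q := pow_le_pow_left₀ (div_nonneg (Nat.cast_nonneg a) (by norm_num)) hhalf Q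
          _ ≤ (Q.factorial:ℝ) * (a.choose Q : ℝ) := by exact_mod_cast hdesc
          _ ≤ _ := by
              refine mul_le_mul_of_nonneg_left ?_ (by positivity)
              exact_mod_cast hnat
      have hc3 : ((a:ℝ)/2)^Q ≤ D * ((n:ℝ) ^ ((Q:ℝ) - 1/P')) := by
        refine hc2.trans ?_
        have h2 : (n:ℝ)^(Q-1) * (A'.card:ℝ) ≤ (n:ℝ)^(Q-1) * (C' * (n:ℝ)^(1-1/P')) :=
          mul_le_mul_of_nonneg_left hA'le (by positivity)
        refine (mul_le_mul_of_nonneg_left h2 (by positivity)).trans_eq ?_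
        have hcastQ : ((Q - 1 : ℕ):ℝ) = (Q:ℝ) - 1 := by
          push_cast [hQ1]
          ring
        have hmerge : ((n:ℝ))^((Q-1 : ℕ)) * ((n:ℝ)) ^ (1-1/P') = (n:ℝ) ^ ((Q:ℝ)-1/P') := by
          rw [← Real.rpow_natCast (n:ℝ) (Q-1), ← Real.rpow_add hnpos, hcastQ,
            show (Q:ℝ) - 1 + (1 - 1/P') = (Q:ℝ) - 1/P' by ring]
        calc (Q.factorial:ℝ) * ((n:ℝ)^(Q-1) * (C' * (n:ℝ)^(1-1/P')))
            = ((Q.factorial:ℝ) * C') * ((n:ℝ)^(Q-1) * (n:ℝ)^(1-1/P')) := by ring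
          _ = D * ((n:ℝ) ^ ((Q:ℝ)-1/P')) := by rw [hmerge, hDdef]
      have hQne : (Q:ℝ) ≠ 0 := by positivity
      have hP'ne : P' ≠ 0 := by positivity
      have hepos : (0:ℝ) ≤ e := by rw [hedef]; positivity
      have hfinal : (a:ℝ)/2 ≤ D^e * (n:ℝ)^(1 - 1/P) := by
        have hx2 : (0:ℝ) ≤ (a:ℝ)/2 := div_nonneg (Nat.cast_nonneg a) (by norm_num)
        have h1 : (a:ℝ)/2 = (((a:ℝ)/2)^(Q:ℕ)) ^ e := by
          rw [← Real.rpow_natCast ((a:ℝ)/2) Q, ← Real.rpow_mul hx2, hedef,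
            mul_one_div_cancel hQne, Real.rpow_one]
        rw [h1]
        refine (Real.rpow_le_rpow (pow_nonneg hx2 Q) hc3 hepos).trans_eq ?_
        rw [Real.mul_rpow (le_of_lt hDpos) (by positivity),
          ← Real.rpow_mul (le_of_lt hnpos)]
        congr 1
        rw [hedef, hPQ]
        field_simp
      have hrpownn : (0:ℝ) ≤ (n:ℝ)^(1 - 1/P) := le_of_lt (Real.rpow_pos_of_pos hnpos _)
      calc (a : ℝ) = 2 * ((a:ℝ)/2) := by ring
        _ ≤ 2 * (D^e * (n:ℝ)^(1 - 1/P)) := by linarith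
        _ = (2 * D^e) * (n:ℝ)^(1 - 1/P) := by ring
        _ ≤ _ := mul_le_mul_of_nonneg_right (le_max_left _ _) hrpownn

theorem stmt7 (m : ℕ) (ℓ : Fin (m + 2) → ℕ) (hℓ : ∀ i, 2 ≤ ℓ i) (hmono : Monotone ℓ) :
    ∃ C : ℝ, 0 < C ∧ ∀ n : ℕ, 1 ≤ n →
      (Ffin n (m + 2) ℓ : ℝ)
        ≤ C * (n : ℝ) ^ (1 - 1 / (∏ i : Fin (m + 1), (ℓ i.castSucc : ℝ))) := by
  obtain ⟨C, hC, hbound⟩ := key_lemma (m + 1) ℓ (fun i => le_trans one_le_two (hℓ i))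
  refine ⟨C, hC, ?_⟩
  intro n hn
  set s : Set ℕ := {k | ∃ A : Finset ℤ, (↑A : Set ℤ) ⊆ Set.Icc (1 : ℤ) n ∧
      LFree (m + 2) ℓ (A : Set ℤ) ∧ A.card = k} with hs
  have hne : s.Nonempty := by
    refine ⟨0, ∅, by simp, ?_, by simp⟩
    intro L hL hsub
    have hLne : ∀ i, (L i).Nonempty := fun i =>
      Finset.card_pos.1 (by rw [hL i]; exact lt_of_lt_of_le two_pos (hℓ i))
    obtain ⟨y, hy⟩ := sum_finset_nonempty L hLne
    have := hsub (Finset.mem_coe.2 hy)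
    simp at this
  have hbdd : BddAbove s := by
    refine ⟨n, ?_⟩
    rintro k ⟨A, hA, -, rfl⟩
    have : A ⊆ Finset.Icc (1 : ℤ) n := by
      intro x hx
      have := hA (Finset.mem_coe.2 hx)
      simpa [Finset.mem_Icc] using this
    calc A.card ≤ (Finset.Icc (1 : ℤ) (n : ℤ)).card := Finset.card_le_card this
      _ = ((n : ℤ) + 1 - 1).toNat := Int.card_Icc _ _
      _ = n := by simp
  have hmem : Ffin n (m + 2) ℓ ∈ s := Nat.sSup_mem hne hbdd
  obtain ⟨A, hA, hfree, hcard⟩ := hmem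
  rw [← hcard]
  exact hbound n hn A hA hfree
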